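/- arXiv:1307.1690 — 2 statements merged into one kernel-verified Lean document; each statement's English description precedes it below -/
import Mathlib

section
/- Fix $n \geq 3$, $p \in (0, 1/6)$, and $s, l \in (0,1]$ with $(n-2) p s^2 l \geq 24 \log n$. Consider a family of mutually independent Bernoulli random variables: for each unordered pair $\{i, z\}$ of elements of $\{1,\dots,n\}$, indicators $E_{iz}$ with parameter $p$, $S^1_{iz}$ with parameter $s$, and $S^2_{iz}$ with parameter $s$; and for each $z \in \{1,\dots,n\}$, an indicator $L_z$ with parameter $l$. For each $i$ define $W(i,i) = \#\{ z \neq i : E_{iz} = S^1_{iz} = S^2_{iz} = L_z = 1\}$, and for each ordered pair $i \neq j$ define $W(i,j) = \#\{ z \notin \{i,j\} : E_{iz} = S^1_{iz} = E_{jz} = S^2_{jz} = L_z = 1\}$. Then with probability at least $1 - 2/n$, simultaneously: $W(i,i) \geq \tfrac{1}{2}(n-1) p s^2 l$ for every $i$, and $W(i,j) \leq \tfrac{1}{2}(n-2) p s^2 l$ for every ordered pair $i \neq j$. -/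
open MeasureTheory ProbabilityTheory


section Aux
variable {Ω : Type*} [MeasurableSpace Ω] {μ : Measure Ω} [IsProbabilityMeasure μ]

lemma indep_groups {κ α : Type*} [DecidableEq κ]
    (X : κ → Ω → Bool) (hmeas : ∀ k, Measurable (X k))
    (hindep : iIndepFun X μ)
    (T : α → Finset κ) (hdisj : ∀ a b, a ≠ b → Disjoint (T a) (T b)) :
    iIndepSet (fun a => ⋂ k ∈ T a, {ω | X k ω = true}) μ ∧
    ∀ a, μ (⋂ k ∈ (T a), {ω | X k ω = true}) = ∏ k ∈ T a, μ {ω | X k ω = true} := by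
  have hcomap : ∀ k : κ, MeasurableSet[MeasurableSpace.comap (X k) ⊤] {ω | X k ω = true} :=
    fun k => ⟨{true}, trivial, rfl⟩
  have hone : ∀ a, μ (⋂ k ∈ (T a), {ω | X k ω = true}) = ∏ k ∈ T a, μ {ω | X k ω = true} := by
    intro a
    exact hindep.meas_biInter (fun k _ => hcomap k)
  refine ⟨?_, hone⟩
  have hBmeas : ∀ a, MeasurableSet (⋂ k ∈ T a, {ω | X k ω = true}) := by
    intro a
    exact Set.Finite.measurableSet_biInter (Finset.finite_toSet _)
      (fun k _ => (hmeas k) (MeasurableSet.singleton true))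
  rw [iIndepSet_iff_meas_biInter hBmeas]
  intro S
  rw [← Finset.set_biInter_biUnion S T (fun k => {ω | X k ω = true}),
    hindep.meas_biInter (fun k _ => hcomap k),
    Finset.prod_biUnion (fun a _ b _ hab => hdisj a b hab)]
  exact Finset.prod_congr rfl fun a _ => (hone a).symm

lemma exp_indicator (B : Set Ω) (t : ℝ) (ω : Ω) :
    Real.exp (t * B.indicator (fun _ => (1:ℝ)) ω) =
      1 + (Real.exp t - 1) * B.indicator (fun _ => (1:ℝ)) ω := by
  by_cases h : ω ∈ B <;> simp [Set.indicator_of_mem, Set.indicator_of_notMem, h]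

lemma mgf_indicator (B : Set Ω) (hB : MeasurableSet B) (t : ℝ) :
    mgf (B.indicator (fun _ => (1:ℝ))) μ t = 1 + (Real.exp t - 1) * (μ B).toReal := by
  have hint : Integrable (B.indicator (fun _ => (1:ℝ))) μ :=
    (integrable_const (1:ℝ)).indicator hB
  have : mgf (B.indicator (fun _ => (1:ℝ))) μ t
      = ∫ ω, (1 + (Real.exp t - 1) * B.indicator (fun _ => (1:ℝ)) ω) ∂μ := by
    unfold mgf
    exact integral_congr_ae (Filter.Eventually.of_forall fun ω => exp_indicator B t ω)
  rw [this, integral_add (integrable_const 1) (hint.const_mul _), integral_const,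
    MeasureTheory.integral_const_mul, measureReal_def, measure_univ, integral_indicator_const (1:ℝ) hB,
    measureReal_def]
  simp

lemma integrable_exp_indicator_sum {α : Type*} [Fintype α] (B : α → Set Ω)
    (hB : ∀ a, MeasurableSet (B a)) (t : ℝ) :
    Integrable (fun ω => Real.exp (t * ∑ a, (B a).indicator (fun _ => (1:ℝ)) ω)) μ := by
  have hmeas : Measurable fun ω => ∑ a, (B a).indicator (fun _ => (1:ℝ)) ω :=
    Finset.measurable_sum _ fun a _ => measurable_const.indicator (hB a)
  refine Integrable.mono' (integrable_const (Real.exp (|t| * Fintype.card α)))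
    ((hmeas.const_mul t).exp.aestronglyMeasurable) ?_
  refine Filter.Eventually.of_forall fun ω => ?_
  rw [Real.norm_eq_abs, abs_of_pos (Real.exp_pos _), Real.exp_le_exp]
  have h0 : 0 ≤ ∑ a, (B a).indicator (fun _ => (1:ℝ)) ω :=
    Finset.sum_nonneg fun a _ => Set.indicator_nonneg (fun _ _ => zero_le_one) ω
  have h1 : ∑ a, (B a).indicator (fun _ => (1:ℝ)) ω ≤ Fintype.card α := by
    calc ∑ a, (B a).indicator (fun _ => (1:ℝ)) ω ≤ ∑ _a : α, (1:ℝ) :=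
          Finset.sum_le_sum fun a _ => Set.indicator_le_self' (fun _ _ => zero_le_one) ω
      _ = Fintype.card α := by simp
  calc t * ∑ a, (B a).indicator (fun _ => (1:ℝ)) ω
      ≤ |t| * ∑ a, (B a).indicator (fun _ => (1:ℝ)) ω :=
        mul_le_mul_of_nonneg_right (le_abs_self t) h0
    _ ≤ |t| * Fintype.card α := mul_le_mul_of_nonneg_left h1 (abs_nonneg t)

lemma mgf_indicator_sum {α : Type*} [Fintype α] (B : α → Set Ω)
    (hB : ∀ a, MeasurableSet (B a)) (hind : iIndepSet B μ) (q t : ℝ)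
    (hq : ∀ a, (μ (B a)).toReal = q) :
    mgf (fun ω => ∑ a, (B a).indicator (fun _ => (1:ℝ)) ω) μ t
      = (1 + (Real.exp t - 1) * q) ^ (Fintype.card α) := by
  have hfun : (fun ω => ∑ a, (B a).indicator (fun _ => (1:ℝ)) ω)
      = ∑ a : α, (B a).indicator (fun _ => (1:ℝ)) := by
    funext ω; simp [Finset.sum_apply]
  rw [hfun, iIndepFun.mgf_sum (hind.iIndepFun_indicator)
    (fun a => measurable_const.indicator (hB a))]
  rw [Finset.prod_congr rfl fun a _ => (mgf_indicator (B a) (hB a) t).trans (by rw [hq a])]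
  simp [Finset.prod_const, Finset.card_univ]

lemma chernoff_lower {α : Type*} [Fintype α] (B : α → Set Ω)
    (hB : ∀ a, MeasurableSet (B a)) (hind : iIndepSet B μ) (q : ℝ)
    (hq : ∀ a, (μ (B a)).toReal = q) (ε t : ℝ) (ht : t ≤ 0) :
    (μ {ω | ∑ a, (B a).indicator (fun _ => (1:ℝ)) ω ≤ ε}).toReal
      ≤ Real.exp (-t * ε) * (1 + (Real.exp t - 1) * q) ^ (Fintype.card α) := by
  have h := measure_le_le_exp_mul_mgf (μ := μ)
    (X := fun ω => ∑ a, (B a).indicator (fun _ => (1:ℝ)) ω) ε ht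
    (integrable_exp_indicator_sum B hB t)
  rwa [mgf_indicator_sum B hB hind q t hq] at h

lemma chernoff_upper {α : Type*} [Fintype α] (B : α → Set Ω)
    (hB : ∀ a, MeasurableSet (B a)) (hind : iIndepSet B μ) (q : ℝ)
    (hq : ∀ a, (μ (B a)).toReal = q) (ε t : ℝ) (ht : 0 ≤ t) :
    (μ {ω | ε ≤ ∑ a, (B a).indicator (fun _ => (1:ℝ)) ω}).toReal
      ≤ Real.exp (-t * ε) * (1 + (Real.exp t - 1) * q) ^ (Fintype.card α) := by
  have h := measure_ge_le_exp_mul_mgf (μ := μ)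
    (X := fun ω => ∑ a, (B a).indicator (fun _ => (1:ℝ)) ω) ε ht
    (integrable_exp_indicator_sum B hB t)
  rwa [mgf_indicator_sum B hB hind q t hq] at h

lemma pow_base_le_exp (N : ℕ) (x : ℝ) (hbase : 0 ≤ 1 + x) :
    (1 + x) ^ N ≤ Real.exp ((N : ℝ) * x) := by
  calc (1 + x) ^ N ≤ (Real.exp x) ^ N := by
        refine pow_le_pow_left₀ hbase ?_ N
        linarith [Real.add_one_le_exp x]
    _ = Real.exp ((N : ℝ) * x) := (Real.exp_nat_mul x N).symm

end Aux

section Tail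
variable {Ω : Type*} [MeasurableSpace Ω] {μ : Measure Ω} [IsProbabilityMeasure μ]

lemma tail_lower {α : Type*} [Fintype α] (B : α → Set Ω)
    (hB : ∀ a, MeasurableSet (B a)) (hind : iIndepSet B μ) (q : ℝ)
    (hq : ∀ a, (μ (B a)).toReal = q) (hq0 : 0 ≤ q) (hq1 : q ≤ 1) (nR : ℝ) (hn1 : 1 < nR)
    (hm : 24 * Real.log nR ≤ (Fintype.card α : ℝ) * q) :
    μ {ω | ∑ a, (B a).indicator (fun _ => (1:ℝ)) ω ≤ (Fintype.card α : ℝ) * q / 2}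
      ≤ ENNReal.ofReal (1 / nR ^ 3) := by
  have hnpos : (0:ℝ) < nR := by linarith
  set N : ℝ := (Fintype.card α : ℝ) with hN
  have hNn : 0 ≤ N := Nat.cast_nonneg _
  have hch := chernoff_lower B hB hind q hq (N * q / 2) (-1) (by norm_num)
  have hlog : 0 < Real.log nR := Real.log_pos hn1
  have hbase : 0 ≤ 1 + (Real.exp (-1) - 1) * q := by
    nlinarith [Real.exp_pos (-1)]
  have hstep : (1 + (Real.exp (-1) - 1) * q) ^ (Fintype.card α)
      ≤ Real.exp (N * ((Real.exp (-1) - 1) * q)) := pow_base_le_exp _ _ hbase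
  have hexpinv : Real.exp (-1) ≤ 3/8 := by
    have h1 : Real.exp (-1) * Real.exp 1 = 1 := by
      rw [← Real.exp_add]; norm_num
    nlinarith [Real.exp_one_gt_d9, Real.exp_pos (-1)]
  have hfinal : Real.exp (-(-1) * (N * q / 2)) * (1 + (Real.exp (-1) - 1) * q) ^ (Fintype.card α)
      ≤ 1 / nR ^ 3 := by
    calc Real.exp (-(-1) * (N * q / 2)) * (1 + (Real.exp (-1) - 1) * q) ^ (Fintype.card α)
        ≤ Real.exp (-(-1) * (N * q / 2)) * Real.exp (N * ((Real.exp (-1) - 1) * q)) :=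
          mul_le_mul_of_nonneg_left hstep (Real.exp_pos _).le
      _ = Real.exp (N * q * (Real.exp (-1) - 1/2)) := by
          rw [← Real.exp_add]; ring_nf
      _ ≤ Real.exp (-(3 * Real.log nR)) := by
          rw [Real.exp_le_exp]
          have hNq : 24 * Real.log nR ≤ N * q := hm
          nlinarith [mul_nonneg hNn hq0]
      _ = 1 / nR ^ 3 := by
          rw [Real.exp_neg, show (3:ℝ) * Real.log nR = Real.log (nR ^ 3) by
            rw [Real.log_pow]; push_cast; ring, Real.exp_log (by positivity), one_div]
  refine (ENNReal.le_ofReal_iff_toReal_le (measure_ne_top _ _) (by positivity)).mpr ?_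
  exact hch.trans hfinal

lemma tail_upper {α : Type*} [Fintype α] (B : α → Set Ω)
    (hB : ∀ a, MeasurableSet (B a)) (hind : iIndepSet B μ) (q : ℝ)
    (hq : ∀ a, (μ (B a)).toReal = q) (hq0 : 0 ≤ q) (nR : ℝ) (hn1 : 1 < nR) (ε : ℝ)
    (hmean : (Fintype.card α : ℝ) * q ≤ ε / 3) (hε : 12 * Real.log nR ≤ ε) :
    μ {ω | ε ≤ ∑ a, (B a).indicator (fun _ => (1:ℝ)) ω}
      ≤ ENNReal.ofReal (1 / nR ^ 3) := by
  have hnpos : (0:ℝ) < nR := by linarith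
  set N : ℝ := (Fintype.card α : ℝ) with hN
  have hNn : 0 ≤ N := Nat.cast_nonneg _
  have hlog : 0 < Real.log nR := Real.log_pos hn1
  have hεpos : 0 < ε := lt_of_lt_of_le (by positivity) hε
  have hch := chernoff_upper B hB hind q hq ε 1 (by norm_num)
  have hbase : 0 ≤ 1 + (Real.exp 1 - 1) * q := by
    nlinarith [Real.exp_one_gt_d9]
  have hstep : (1 + (Real.exp 1 - 1) * q) ^ (Fintype.card α)
      ≤ Real.exp (N * ((Real.exp 1 - 1) * q)) := pow_base_le_exp _ _ hbase
  have hfinal : Real.exp (-1 * ε) * (1 + (Real.exp 1 - 1) * q) ^ (Fintype.card α)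
      ≤ 1 / nR ^ 3 := by
    calc Real.exp (-1 * ε) * (1 + (Real.exp 1 - 1) * q) ^ (Fintype.card α)
        ≤ Real.exp (-1 * ε) * Real.exp (N * ((Real.exp 1 - 1) * q)) :=
          mul_le_mul_of_nonneg_left hstep (Real.exp_pos _).le
      _ = Real.exp (-ε + N * q * (Real.exp 1 - 1)) := by
          rw [← Real.exp_add]; ring_nf
      _ ≤ Real.exp (-(3 * Real.log nR)) := by
          rw [Real.exp_le_exp]
          have he : Real.exp 1 - 1 ≤ 9/4 := by nlinarith [Real.exp_one_lt_d9]
          have h2 : N * q * (Real.exp 1 - 1) ≤ (ε/3) * (9/4) := by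
            apply mul_le_mul hmean he (by nlinarith [Real.exp_one_gt_d9]) (by linarith)
          nlinarith
      _ = 1 / nR ^ 3 := by
          rw [Real.exp_neg, show (3:ℝ) * Real.log nR = Real.log (nR ^ 3) by
            rw [Real.log_pow]; push_cast; ring, Real.exp_log (by positivity), one_div]
  refine (ENNReal.le_ofReal_iff_toReal_le (measure_ne_top _ _) (by positivity)).mpr ?_
  exact hch.trans hfinal

end Tail


set_option maxHeartbeats 3200000 in
/-- Full Theorem 1 (thm:p-large): in the Erdős–Rényi reconciliation model, with
probability at least `1 - 2/n`, every correct pair has at least `(n-1)ps²l/2`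
similarity witnesses and every mismatched ordered pair has at most `(n-2)ps²l/2`. -/
theorem stmt2 {Ω : Type} [MeasurableSpace Ω] (μ : Measure Ω) [IsProbabilityMeasure μ]
    (n : ℕ) (hn : 3 ≤ n) (p s l : ℝ)
    (hp : 0 < p) (hp6 : p < 1 / 6) (hs : s ∈ Set.Ioc (0 : ℝ) 1) (hl : l ∈ Set.Ioc (0 : ℝ) 1)
    (hcond : 24 * Real.log n ≤ ((n : ℝ) - 2) * p * s ^ 2 * l)
    (X : (Sym2 (Fin n) ⊕ Sym2 (Fin n) ⊕ Sym2 (Fin n) ⊕ Fin n) → Ω → Bool)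
    (hmeas : ∀ k, Measurable (X k))
    (hindep : iIndepFun X μ)
    (hE : ∀ e : Sym2 (Fin n), μ {ω | X (Sum.inl e) ω = true} = ENNReal.ofReal p)
    (hS1 : ∀ e : Sym2 (Fin n), μ {ω | X (Sum.inr (Sum.inl e)) ω = true} = ENNReal.ofReal s)
    (hS2 : ∀ e : Sym2 (Fin n),
      μ {ω | X (Sum.inr (Sum.inr (Sum.inl e))) ω = true} = ENNReal.ofReal s)
    (hL : ∀ z : Fin n, μ {ω | X (Sum.inr (Sum.inr (Sum.inr z))) ω = true} = ENNReal.ofReal l)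
    (W : Fin n → Fin n → Ω → ℕ)
    (hWdiag : ∀ i ω, W i i ω = (Finset.univ.filter fun z : Fin n => z ≠ i ∧
        X (Sum.inl (s(i, z))) ω = true ∧
        X (Sum.inr (Sum.inl (s(i, z)))) ω = true ∧
        X (Sum.inr (Sum.inr (Sum.inl (s(i, z))))) ω = true ∧
        X (Sum.inr (Sum.inr (Sum.inr z))) ω = true).card)
    (hWoff : ∀ i j : Fin n, i ≠ j → ∀ ω, W i j ω =
        (Finset.univ.filter fun z : Fin n => z ≠ i ∧ z ≠ j ∧
        X (Sum.inl (s(i, z))) ω = true ∧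
        X (Sum.inr (Sum.inl (s(i, z)))) ω = true ∧
        X (Sum.inl (s(j, z))) ω = true ∧
        X (Sum.inr (Sum.inr (Sum.inl (s(j, z))))) ω = true ∧
        X (Sum.inr (Sum.inr (Sum.inr z))) ω = true).card) :
    1 - 2 / (n : ENNReal) ≤ μ {ω |
      (∀ i : Fin n, ((n : ℝ) - 1) * p * s ^ 2 * l / 2 ≤ (W i i ω : ℝ)) ∧
      (∀ i j : Fin n, i ≠ j → (W i j ω : ℝ) ≤ ((n : ℝ) - 2) * p * s ^ 2 * l / 2)} := by
  classical
  obtain ⟨hs0, hs1⟩ := hs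
  obtain ⟨hl0, hl1⟩ := hl
  have hnR : (3:ℝ) ≤ (n:ℝ) := by exact_mod_cast hn
  have hnpos : (0:ℝ) < n := by linarith
  have hn1 : (1:ℝ) < n := by linarith
  have hlogpos : 0 < Real.log n := Real.log_pos hn1
  set q1 : ℝ := p * s ^ 2 * l with hq1def
  have hq1pos : 0 < q1 := by positivity
  have hsq : s ^ 2 ≤ 1 := by nlinarith
  have hps : p * s ^ 2 ≤ 1 := by nlinarith
  have hq1le : q1 ≤ 1 := by rw [hq1def]; nlinarith
  have hcond' : 24 * Real.log n ≤ ((n:ℝ) - 2) * q1 := by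
    have h : ((n:ℝ) - 2) * q1 = ((n:ℝ) - 2) * p * s ^ 2 * l := by rw [hq1def]; ring
    rw [h]; exact hcond
  have hAmeas : ∀ k, MeasurableSet {ω | X k ω = true} :=
    fun k => (hmeas k) (MeasurableSet.singleton true)
  set c : ENNReal := ENNReal.ofReal (1 / (n:ℝ) ^ 3) with hc
  -- diagonal tail bound
  have key1 : ∀ i : Fin n,
      μ {ω | ((W i i ω : ℝ)) < ((n:ℝ) - 1) * p * s ^ 2 * l / 2} ≤ c := by
    intro i
    set T : {z : Fin n // z ≠ i} → Finset (Sym2 (Fin n) ⊕ Sym2 (Fin n) ⊕ Sym2 (Fin n) ⊕ Fin n) :=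
      fun z => {Sum.inl (s(i, z.1)), Sum.inr (Sum.inl (s(i, z.1))),
        Sum.inr (Sum.inr (Sum.inl (s(i, z.1)))), Sum.inr (Sum.inr (Sum.inr z.1))} with hT
    have hdisj : ∀ a b : {z : Fin n // z ≠ i}, a ≠ b → Disjoint (T a) (T b) := by
      intro a b hab
      have hab' : a.1 ≠ b.1 := fun h => hab (Subtype.ext h)
      have hai := a.2
      have hbi := b.2
      have hia := Ne.symm a.2
      have hib := Ne.symm b.2
      rw [Finset.disjoint_left]
      intro k hk hk'
      simp only [hT, Finset.mem_insert, Finset.mem_singleton] at hk hk'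
      rcases hk with rfl|rfl|rfl|rfl <;> rcases hk' with h|h|h|h <;>
        simp only [Sum.inl.injEq, Sum.inr.injEq, Sym2.eq_iff, reduceCtorEq] at h <;> tauto
    obtain ⟨hind, hBeq⟩ := indep_groups X hmeas hindep T hdisj
    have hBmeas : ∀ z, MeasurableSet (⋂ k ∈ T z, {ω | X k ω = true}) := fun z =>
      Set.Finite.measurableSet_biInter (Finset.finite_toSet _) fun k _ => hAmeas k
    have hqB : ∀ z, (μ (⋂ k ∈ T z, {ω | X k ω = true})).toReal = q1 := by
      intro z
      rw [hBeq z, hT]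
      rw [Finset.prod_insert (by simp), Finset.prod_insert (by simp),
        Finset.prod_insert (by simp), Finset.prod_singleton, hE, hS1, hS2, hL]
      rw [ENNReal.toReal_mul, ENNReal.toReal_mul, ENNReal.toReal_mul,
        ENNReal.toReal_ofReal hp.le, ENNReal.toReal_ofReal hs0.le,
        ENNReal.toReal_ofReal hl0.le, hq1def]
      ring
    have hcard1 : Fintype.card {z : Fin n // z ≠ i} = n - 1 := by
      rw [Fintype.card_subtype]
      have h : Finset.univ.filter (fun z : Fin n => z ≠ i) = Finset.univ \ {i} := by
        ext z; simp
      rw [h, Finset.card_sdiff_of_subset (Finset.subset_univ _), Finset.card_univ, Fintype.card_fin,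
        Finset.card_singleton]
    have hcast1 : ((Fintype.card {z : Fin n // z ≠ i} : ℕ) : ℝ) = (n:ℝ) - 1 := by
      rw [hcard1]; have h1 : 1 ≤ n := by omega
      push_cast [h1]; ring
    have hWS : ∀ ω, (W i i ω : ℝ) =
        ∑ z : {z : Fin n // z ≠ i},
          (⋂ k ∈ T z, {ω | X k ω = true}).indicator (fun _ => (1:ℝ)) ω := by
      intro ω
      rw [hWdiag i ω]
      have h1 : (Finset.univ.filter fun z : Fin n => z ≠ i ∧
          X (Sum.inl (s(i, z))) ω = true ∧
          X (Sum.inr (Sum.inl (s(i, z)))) ω = true ∧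
          X (Sum.inr (Sum.inr (Sum.inl (s(i, z))))) ω = true ∧
          X (Sum.inr (Sum.inr (Sum.inr z))) ω = true) =
          (Finset.univ.filter fun z : Fin n => z ≠ i).filter (fun z =>
          X (Sum.inl (s(i, z))) ω = true ∧
          X (Sum.inr (Sum.inl (s(i, z)))) ω = true ∧
          X (Sum.inr (Sum.inr (Sum.inl (s(i, z))))) ω = true ∧
          X (Sum.inr (Sum.inr (Sum.inr z))) ω = true) := by
        ext z; simp [Finset.mem_filter, and_assoc]
      rw [h1, Finset.card_filter]
      push_cast
      rw [Finset.sum_subtype (p := fun z : Fin n => z ≠ i) (Finset.univ.filter fun z : Fin n => z ≠ i) (by simp)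
        (fun z => if X (Sum.inl (s(i, z))) ω = true ∧
          X (Sum.inr (Sum.inl (s(i, z)))) ω = true ∧
          X (Sum.inr (Sum.inr (Sum.inl (s(i, z))))) ω = true ∧
          X (Sum.inr (Sum.inr (Sum.inr z))) ω = true then (1:ℝ) else 0)]
      refine Finset.sum_congr rfl fun z _ => ?_
      have hmem : ω ∈ ⋂ k ∈ T z, {ω | X k ω = true} ↔
          (X (Sum.inl (s(i, z.1))) ω = true ∧
          X (Sum.inr (Sum.inl (s(i, z.1)))) ω = true ∧
          X (Sum.inr (Sum.inr (Sum.inl (s(i, z.1))))) ω = true ∧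
          X (Sum.inr (Sum.inr (Sum.inr z.1))) ω = true) := by
        simp [hT]
      rw [Set.indicator_apply]
      by_cases h : ω ∈ ⋂ k ∈ T z, {ω | X k ω = true}
      · rw [if_pos h, if_pos (hmem.mp h)]
      · rw [if_neg h, if_neg (fun hC => h (hmem.mpr hC))]
    have hbound := tail_lower (μ := μ) (fun z => ⋂ k ∈ T z, {ω | X k ω = true})
      hBmeas hind q1 hqB hq1pos.le hq1le (n:ℝ) hn1 (by
        rw [hcast1]
        have h : ((n:ℝ) - 1) * q1 = ((n:ℝ) - 2) * q1 + q1 := by ring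
        linarith)
    refine le_trans (measure_mono ?_) hbound
    intro ω hω
    simp only [Set.mem_setOf_eq] at hω ⊢
    rw [← hWS ω, hcast1]
    have h : ((n:ℝ) - 1) * q1 / 2 = ((n:ℝ) - 1) * p * s ^ 2 * l / 2 := by rw [hq1def]; ring
    rw [h]
    exact hω.le
  -- off-diagonal tail bound
  have key2 : ∀ i j : Fin n, i ≠ j →
      μ {ω | ((n:ℝ) - 2) * p * s ^ 2 * l / 2 < ((W i j ω : ℝ))} ≤ c := by
    intro i j hij
    set T : {z : Fin n // z ≠ i ∧ z ≠ j} →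
        Finset (Sym2 (Fin n) ⊕ Sym2 (Fin n) ⊕ Sym2 (Fin n) ⊕ Fin n) :=
      fun z => {Sum.inl (s(i, z.1)), Sum.inr (Sum.inl (s(i, z.1))),
        Sum.inl (s(j, z.1)), Sum.inr (Sum.inr (Sum.inl (s(j, z.1)))),
        Sum.inr (Sum.inr (Sum.inr z.1))} with hT
    have hdisj : ∀ a b : {z : Fin n // z ≠ i ∧ z ≠ j}, a ≠ b → Disjoint (T a) (T b) := by
      intro a b hab
      have hab' : a.1 ≠ b.1 := fun h => hab (Subtype.ext h)
      obtain ⟨hai, haj⟩ := a.2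
      obtain ⟨hbi, hbj⟩ := b.2
      have hia := Ne.symm hai
      have hja := Ne.symm haj
      have hib := Ne.symm hbi
      have hjb := Ne.symm hbj
      have hji := Ne.symm hij
      rw [Finset.disjoint_left]
      intro k hk hk'
      simp only [hT, Finset.mem_insert, Finset.mem_singleton] at hk hk'
      rcases hk with rfl|rfl|rfl|rfl|rfl <;> rcases hk' with h|h|h|h|h <;>
        simp only [Sum.inl.injEq, Sum.inr.injEq, Sym2.eq_iff, reduceCtorEq] at h <;> tauto
    obtain ⟨hind, hBeq⟩ := indep_groups X hmeas hindep T hdisj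
    have hBmeas : ∀ z, MeasurableSet (⋂ k ∈ T z, {ω | X k ω = true}) := fun z =>
      Set.Finite.measurableSet_biInter (Finset.finite_toSet _) fun k _ => hAmeas k
    have hqB : ∀ z, (μ (⋂ k ∈ T z, {ω | X k ω = true})).toReal = p ^ 2 * s ^ 2 * l := by
      intro z
      obtain ⟨hzi, hzj⟩ := z.2
      have hedge : s(i, z.1) ≠ s(j, z.1) := by
        intro h'
        rcases Sym2.eq_iff.mp h' with ⟨h, -⟩ | ⟨-, h⟩
        exacts [hij h, hzj h]
      rw [hBeq z, hT]
      rw [Finset.prod_insert (by simp [hedge]), Finset.prod_insert (by simp),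
        Finset.prod_insert (by simp), Finset.prod_insert (by simp), Finset.prod_singleton,
        hE, hE, hS1, hS2, hL]
      rw [ENNReal.toReal_mul, ENNReal.toReal_mul, ENNReal.toReal_mul, ENNReal.toReal_mul,
        ENNReal.toReal_ofReal hp.le, ENNReal.toReal_ofReal hs0.le,
        ENNReal.toReal_ofReal hl0.le]
      ring
    have hcard2 : Fintype.card {z : Fin n // z ≠ i ∧ z ≠ j} = n - 2 := by
      rw [Fintype.card_subtype]
      have h : Finset.univ.filter (fun z : Fin n => z ≠ i ∧ z ≠ j) =
          Finset.univ \ {i, j} := by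
        ext z; simp [not_or]
      rw [h, Finset.card_sdiff_of_subset (Finset.subset_univ _), Finset.card_univ, Fintype.card_fin,
        Finset.card_insert_of_notMem (by simp [hij]), Finset.card_singleton]
    have hcast2 : ((Fintype.card {z : Fin n // z ≠ i ∧ z ≠ j} : ℕ) : ℝ) = (n:ℝ) - 2 := by
      rw [hcard2]; have h2 : 2 ≤ n := by omega
      push_cast [h2]; ring
    have hWS : ∀ ω, (W i j ω : ℝ) =
        ∑ z : {z : Fin n // z ≠ i ∧ z ≠ j},
          (⋂ k ∈ T z, {ω | X k ω = true}).indicator (fun _ => (1:ℝ)) ω := by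
      intro ω
      rw [hWoff i j hij ω]
      have h1 : (Finset.univ.filter fun z : Fin n => z ≠ i ∧ z ≠ j ∧
          X (Sum.inl (s(i, z))) ω = true ∧
          X (Sum.inr (Sum.inl (s(i, z)))) ω = true ∧
          X (Sum.inl (s(j, z))) ω = true ∧
          X (Sum.inr (Sum.inr (Sum.inl (s(j, z))))) ω = true ∧
          X (Sum.inr (Sum.inr (Sum.inr z))) ω = true) =
          (Finset.univ.filter fun z : Fin n => z ≠ i ∧ z ≠ j).filter (fun z =>
          X (Sum.inl (s(i, z))) ω = true ∧
          X (Sum.inr (Sum.inl (s(i, z)))) ω = true ∧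
          X (Sum.inl (s(j, z))) ω = true ∧
          X (Sum.inr (Sum.inr (Sum.inl (s(j, z))))) ω = true ∧
          X (Sum.inr (Sum.inr (Sum.inr z))) ω = true) := by
        ext z; simp [Finset.mem_filter, and_assoc]
      rw [h1, Finset.card_filter]
      push_cast
      rw [Finset.sum_subtype (p := fun z : Fin n => z ≠ i ∧ z ≠ j)
        (Finset.univ.filter fun z : Fin n => z ≠ i ∧ z ≠ j) (by simp)
        (fun z => if X (Sum.inl (s(i, z))) ω = true ∧
          X (Sum.inr (Sum.inl (s(i, z)))) ω = true ∧
          X (Sum.inl (s(j, z))) ω = true ∧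
          X (Sum.inr (Sum.inr (Sum.inl (s(j, z))))) ω = true ∧
          X (Sum.inr (Sum.inr (Sum.inr z))) ω = true then (1:ℝ) else 0)]
      refine Finset.sum_congr rfl fun z _ => ?_
      have hmem : ω ∈ ⋂ k ∈ T z, {ω | X k ω = true} ↔
          (X (Sum.inl (s(i, z.1))) ω = true ∧
          X (Sum.inr (Sum.inl (s(i, z.1)))) ω = true ∧
          X (Sum.inl (s(j, z.1))) ω = true ∧
          X (Sum.inr (Sum.inr (Sum.inl (s(j, z.1))))) ω = true ∧
          X (Sum.inr (Sum.inr (Sum.inr z.1))) ω = true) := by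
        simp [hT]
      rw [Set.indicator_apply]
      by_cases h : ω ∈ ⋂ k ∈ T z, {ω | X k ω = true}
      · rw [if_pos h, if_pos (hmem.mp h)]
      · rw [if_neg h, if_neg (fun hC => h (hmem.mpr hC))]
    have hnn : (0:ℝ) ≤ ((n:ℝ) - 2) * p * s ^ 2 * l :=
      le_trans (by positivity) hcond
    have hbound := tail_upper (μ := μ) (fun z => ⋂ k ∈ T z, {ω | X k ω = true})
      hBmeas hind (p ^ 2 * s ^ 2 * l) hqB (by positivity) (n:ℝ) hn1
      (((n:ℝ) - 2) * p * s ^ 2 * l / 2)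
      (by
        rw [hcast2]
        nlinarith [mul_nonneg hnn (le_of_lt (show (0:ℝ) < 1/6 - p by linarith))])
      (by linarith)
    refine le_trans (measure_mono ?_) hbound
    intro ω hω
    simp only [Set.mem_setOf_eq] at hω ⊢
    rw [← hWS ω]
    exact hω.le
  -- measurability of the witness counts
  have hWmeas : ∀ i j : Fin n, Measurable fun ω => (W i j ω : ℝ) := by
    intro i j
    by_cases hij : i = j
    · subst hij
      have he : (fun ω => (W i i ω : ℝ)) = fun ω => ∑ z : Fin n,
          if (z ≠ i ∧ X (Sum.inl (s(i, z))) ω = true ∧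
            X (Sum.inr (Sum.inl (s(i, z)))) ω = true ∧
            X (Sum.inr (Sum.inr (Sum.inl (s(i, z))))) ω = true ∧
            X (Sum.inr (Sum.inr (Sum.inr z))) ω = true) then (1:ℝ) else 0 := by
        funext ω; rw [hWdiag i ω, Finset.card_filter]; push_cast; rfl
      rw [he]
      refine Finset.measurable_sum _ fun z _ => ?_
      refine Measurable.ite ?_ measurable_const measurable_const
      simp only [Set.setOf_and]
      exact (MeasurableSet.const _).inter ((hAmeas _).inter ((hAmeas _).inter
        ((hAmeas _).inter (hAmeas _))))
    · have he : (fun ω => (W i j ω : ℝ)) = fun ω => ∑ z : Fin n,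
          if (z ≠ i ∧ z ≠ j ∧ X (Sum.inl (s(i, z))) ω = true ∧
            X (Sum.inr (Sum.inl (s(i, z)))) ω = true ∧
            X (Sum.inl (s(j, z))) ω = true ∧
            X (Sum.inr (Sum.inr (Sum.inl (s(j, z))))) ω = true ∧
            X (Sum.inr (Sum.inr (Sum.inr z))) ω = true) then (1:ℝ) else 0 := by
        funext ω; rw [hWoff i j hij ω, Finset.card_filter]; push_cast; rfl
      rw [he]
      refine Finset.measurable_sum _ fun z _ => ?_
      refine Measurable.ite ?_ measurable_const measurable_const
      simp only [Set.setOf_and]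
      exact (MeasurableSet.const _).inter ((MeasurableSet.const _).inter ((hAmeas _).inter
        ((hAmeas _).inter ((hAmeas _).inter ((hAmeas _).inter (hAmeas _))))))
  -- the good event is measurable
  have hGmeas : MeasurableSet {ω |
      (∀ i : Fin n, ((n : ℝ) - 1) * p * s ^ 2 * l / 2 ≤ (W i i ω : ℝ)) ∧
      (∀ i j : Fin n, i ≠ j → (W i j ω : ℝ) ≤ ((n : ℝ) - 2) * p * s ^ 2 * l / 2)} := by
    rw [Set.setOf_and]
    refine MeasurableSet.inter ?_ ?_
    · rw [Set.setOf_forall]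
      exact MeasurableSet.iInter fun i => measurableSet_le measurable_const (hWmeas i i)
    · rw [Set.setOf_forall]
      refine MeasurableSet.iInter fun i => ?_
      rw [Set.setOf_forall]
      refine MeasurableSet.iInter fun j => ?_
      by_cases hij : i = j
      · subst hij
        have : {ω : Ω | i ≠ i → (W i i ω : ℝ) ≤ ((n : ℝ) - 2) * p * s ^ 2 * l / 2} =
            Set.univ := by
          ext ω; simp
        rw [this]; exact MeasurableSet.univ
      · have : {ω : Ω | i ≠ j → (W i j ω : ℝ) ≤ ((n : ℝ) - 2) * p * s ^ 2 * l / 2} =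
            {ω : Ω | (W i j ω : ℝ) ≤ ((n : ℝ) - 2) * p * s ^ 2 * l / 2} := by
          ext ω; simp [hij]
        rw [this]; exact measurableSet_le (hWmeas i j) measurable_const
  -- union bound
  set Bad1 : Fin n → Set Ω :=
    fun i => {ω | ((W i i ω : ℝ)) < ((n:ℝ) - 1) * p * s ^ 2 * l / 2} with hBad1
  set Bad2 : Fin n → Fin n → Set Ω :=
    fun i j => ⋃ (_ : i ≠ j), {ω | ((n:ℝ) - 2) * p * s ^ 2 * l / 2 < ((W i j ω : ℝ))}
    with hBad2
  have hBad2le : ∀ i j, μ (Bad2 i j) ≤ c := by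
    intro i j
    by_cases hij : i = j
    · subst hij; simp [hBad2]
    · rw [hBad2]
      simp only [hij, ne_eq, not_false_eq_true, Set.iUnion_true]
      exact key2 i j hij
  have hcompl : {ω |
      (∀ i : Fin n, ((n : ℝ) - 1) * p * s ^ 2 * l / 2 ≤ (W i i ω : ℝ)) ∧
      (∀ i j : Fin n, i ≠ j → (W i j ω : ℝ) ≤ ((n : ℝ) - 2) * p * s ^ 2 * l / 2)}ᶜ ⊆
      (⋃ i, Bad1 i) ∪ ⋃ i, ⋃ j, Bad2 i j := by
    intro ω hω
    simp only [Set.mem_compl_iff, Set.mem_setOf_eq, not_and_or, not_forall, not_le] at hω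
    simp only [Set.mem_union, Set.mem_iUnion, hBad1, hBad2, Set.mem_setOf_eq]
    rcases hω with ⟨i, hi⟩ | ⟨i, j, hij, h⟩
    · exact Or.inl ⟨i, hi⟩
    · exact Or.inr ⟨i, j, hij, h⟩
  have hμcompl : μ ({ω |
      (∀ i : Fin n, ((n : ℝ) - 1) * p * s ^ 2 * l / 2 ≤ (W i i ω : ℝ)) ∧
      (∀ i j : Fin n, i ≠ j → (W i j ω : ℝ) ≤ ((n : ℝ) - 2) * p * s ^ 2 * l / 2)}ᶜ)
      ≤ 2 / (n : ENNReal) := by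
    have hsum1 : μ (⋃ i, Bad1 i) ≤ ∑ i : Fin n, μ (Bad1 i) :=
      le_trans (measure_iUnion_le _) (le_of_eq (tsum_fintype _))
    have hsum2 : μ (⋃ i, ⋃ j, Bad2 i j) ≤ ∑ i : Fin n, ∑ j : Fin n, μ (Bad2 i j) := by
      refine le_trans (measure_iUnion_le _) ?_
      rw [tsum_fintype]
      exact Finset.sum_le_sum fun i _ =>
        le_trans (measure_iUnion_le _) (le_of_eq (tsum_fintype _))
    have h1 : ∑ i : Fin n, μ (Bad1 i) ≤ (n : ENNReal) * c := by
      calc ∑ i : Fin n, μ (Bad1 i) ≤ ∑ _i : Fin n, c :=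
            Finset.sum_le_sum fun i _ => key1 i
        _ = (n : ENNReal) * c := by
            simp [Finset.sum_const, Finset.card_univ, nsmul_eq_mul]
    have h2 : ∑ i : Fin n, ∑ j : Fin n, μ (Bad2 i j) ≤ (n : ENNReal) * ((n : ENNReal) * c) := by
      calc ∑ i : Fin n, ∑ j : Fin n, μ (Bad2 i j) ≤ ∑ _i : Fin n, ∑ _j : Fin n, c :=
            Finset.sum_le_sum fun i _ => Finset.sum_le_sum fun j _ => hBad2le i j
        _ = (n : ENNReal) * ((n : ENNReal) * c) := by
            simp [Finset.sum_const, Finset.card_univ, nsmul_eq_mul]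
    have htot : (n : ENNReal) * c + (n : ENNReal) * ((n : ENNReal) * c) ≤ 2 / (n : ENNReal) := by
      rw [hc, ← ENNReal.ofReal_natCast n, ← ENNReal.ofReal_mul (Nat.cast_nonneg n),
        ← ENNReal.ofReal_mul (Nat.cast_nonneg n),
        ← ENNReal.ofReal_add (by positivity) (by positivity)]
      have he1 : (n:ℝ) * (1 / (n:ℝ) ^ 3) = 1 / (n:ℝ) ^ 2 := by
        field_simp
      have he2 : (n:ℝ) * ((n:ℝ) * (1 / (n:ℝ) ^ 3)) = 1 / (n:ℝ) := by
        field_simp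
      have h12 : 1 / (n:ℝ) ^ 2 ≤ 1 / (n:ℝ) := by
        apply one_div_le_one_div_of_le hnpos
        nlinarith
      have hle : (n:ℝ) * (1 / (n:ℝ) ^ 3) + (n:ℝ) * ((n:ℝ) * (1 / (n:ℝ) ^ 3)) ≤ 2 / (n:ℝ) := by
        rw [he2, he1]
        have h2n : 2 / (n:ℝ) = 1 / (n:ℝ) + 1 / (n:ℝ) := by ring
        linarith
      refine le_trans (ENNReal.ofReal_le_ofReal hle) ?_
      rw [ENNReal.ofReal_div_of_pos hnpos, ENNReal.ofReal_natCast, ENNReal.ofReal_ofNat]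
    calc μ _ ≤ μ ((⋃ i, Bad1 i) ∪ ⋃ i, ⋃ j, Bad2 i j) := measure_mono hcompl
      _ ≤ μ (⋃ i, Bad1 i) + μ (⋃ i, ⋃ j, Bad2 i j) := measure_union_le _ _
      _ ≤ (n : ENNReal) * c + (n : ENNReal) * ((n : ENNReal) * c) := by
          exact add_le_add (le_trans hsum1 h1) (le_trans hsum2 h2)
      _ ≤ 2 / (n : ENNReal) := htot
  have hadd := measure_add_measure_compl (μ := μ) hGmeas
  rw [measure_univ] at hadd
  rw [tsub_le_iff_right]
  calc (1 : ENNReal) = _ + _ := hadd.symm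
    _ ≤ μ {ω |
      (∀ i : Fin n, ((n : ℝ) - 1) * p * s ^ 2 * l / 2 ≤ (W i i ω : ℝ)) ∧
      (∀ i j : Fin n, i ≠ j → (W i j ω : ℝ) ≤ ((n : ℝ) - 2) * p * s ^ 2 * l / 2)}
      + 2 / (n : ENNReal) := add_le_add_right hμcompl _
end

section
/- Fix $s, l \in (0,1]$ and a constant $c > 0$, and let $n \geq 3$ and $p \leq c \log n / n$. Consider the Erdős–Rényi reconciliation model: mutually independent Bernoulli indicators $E_{iz}$ (parameter $p$) for unordered pairs, $S^1_{iz}, S^2_{iz}$ (parameter $s$), and $L_z$ (parameter $l$), with similarity-witness count $W(i,j) = \#\{ z \notin \{i,j\} : E_{iz} = S^1_{iz} = E_{jz} = S^2_{jz} = L_z = 1\}$ for $i \neq j$. Then the probability that there exists an ordered pair $i \neq j$ with $W(i,j) \geq 3$ is at most $n(n-1) \cdot \frac{(n-2)^3 p^6 s^6 l^3}{6}$, which is $O(\log^6 n / n)$; in particular it tends to $0$ as $n \to \infty$. -/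
open MeasureTheory ProbabilityTheory Filter

def Fwit (n : ℕ) (i j z : Fin n) :
    Finset (Sym2 (Fin n) ⊕ Sym2 (Fin n) ⊕ Sym2 (Fin n) ⊕ Fin n) :=
  {Sum.inl (s(i, z)), Sum.inr (Sum.inl (s(i, z))),
   Sum.inl (s(j, z)), Sum.inr (Sum.inr (Sum.inl (s(j, z)))),
   Sum.inr (Sum.inr (Sum.inr z))}

lemma Fwit_disjoint {n : ℕ} {i j z z' : Fin n} (hzi : z ≠ i) (hzj : z ≠ j)
    (hzi' : z' ≠ i) (hzj' : z' ≠ j) (hzz : z ≠ z') :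
    Disjoint (Fwit n i j z) (Fwit n i j z') := by
  rw [Finset.disjoint_left]
  intro a ha ha'
  simp only [Fwit, Finset.mem_insert, Finset.mem_singleton] at ha ha'
  rcases ha with rfl|rfl|rfl|rfl|rfl <;> simp [Sym2.eq_iff] at ha' <;> tauto

/-- Probabilistic core of Lemma 3: when `p ≤ c log n / n`, with high probability no
mismatched ordered pair has 3 or more similarity witnesses; the failure probability
is at most `n(n-1)·(n-2)³p⁶s⁶l³/6 = O(log⁶ n / n)`, which tends to 0. -/
theorem stmt4 {Ω : Type} [MeasurableSpace Ω] (μ : Measure Ω) [IsProbabilityMeasure μ]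
    (s l c : ℝ) (hs : s ∈ Set.Ioc (0 : ℝ) 1) (hl : l ∈ Set.Ioc (0 : ℝ) 1) (hc : 0 < c)
    (n : ℕ) (hn : 3 ≤ n) (p : ℝ) (hp0 : 0 < p) (hp1 : p ≤ 1)
    (hpc : p ≤ c * Real.log n / n)
    (X : (Sym2 (Fin n) ⊕ Sym2 (Fin n) ⊕ Sym2 (Fin n) ⊕ Fin n) → Ω → Bool)
    (hmeas : ∀ k, Measurable (X k))
    (hindep : iIndepFun X μ)
    (hE : ∀ e : Sym2 (Fin n), μ {ω | X (Sum.inl e) ω = true} = ENNReal.ofReal p)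
    (hS1 : ∀ e : Sym2 (Fin n), μ {ω | X (Sum.inr (Sum.inl e)) ω = true} = ENNReal.ofReal s)
    (hS2 : ∀ e : Sym2 (Fin n),
      μ {ω | X (Sum.inr (Sum.inr (Sum.inl e))) ω = true} = ENNReal.ofReal s)
    (hL : ∀ z : Fin n, μ {ω | X (Sum.inr (Sum.inr (Sum.inr z))) ω = true} = ENNReal.ofReal l)
    (W : Fin n → Fin n → Ω → ℕ)
    (hWoff : ∀ i j : Fin n, i ≠ j → ∀ ω, W i j ω =
        (Finset.univ.filter fun z : Fin n => z ≠ i ∧ z ≠ j ∧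
        X (Sum.inl (s(i, z))) ω = true ∧
        X (Sum.inr (Sum.inl (s(i, z)))) ω = true ∧
        X (Sum.inl (s(j, z))) ω = true ∧
        X (Sum.inr (Sum.inr (Sum.inl (s(j, z))))) ω = true ∧
        X (Sum.inr (Sum.inr (Sum.inr z))) ω = true).card) :
    μ {ω | ∃ i j : Fin n, i ≠ j ∧ 3 ≤ W i j ω} ≤
      ENNReal.ofReal ((n : ℝ) * ((n : ℝ) - 1) *
        (((n : ℝ) - 2) ^ 3 * p ^ 6 * s ^ 6 * l ^ 3) / 6) ∧
    (n : ℝ) * ((n : ℝ) - 1) * (((n : ℝ) - 2) ^ 3 * p ^ 6 * s ^ 6 * l ^ 3) / 6 ≤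
      (c ^ 6 * s ^ 6 * l ^ 3 / 6) * (Real.log n) ^ 6 / n ∧
    Tendsto (fun m : ℕ => (c ^ 6 * s ^ 6 * l ^ 3 / 6) * (Real.log m) ^ 6 / m)
      atTop (nhds 0) := by
  refine ⟨?_, ?_, ?_⟩
  ·
    classical
    have hs0 := hs.1
    have hl0 := hl.1
    have hx0 : (0:ℝ) ≤ p ^ 2 * s ^ 2 * l := by positivity
    -- independence: measure of finite intersections is product
    have key : ∀ S : Finset (Sym2 (Fin n) ⊕ Sym2 (Fin n) ⊕ Sym2 (Fin n) ⊕ Fin n),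
        μ (⋂ k ∈ S, {ω | X k ω = true}) = ∏ k ∈ S, μ {ω | X k ω = true} :=
      fun S => hindep.meas_biInter (fun k _ => ⟨{true}, trivial, rfl⟩)
    -- product over one witness index set
    have hFprod : ∀ i j z : Fin n, i ≠ j →
        ∏ k ∈ Fwit n i j z, μ {ω | X k ω = true} = ENNReal.ofReal (p ^ 2 * s ^ 2 * l) := by
      intro i j z hij
      have hne : (s(i, z) : Sym2 (Fin n)) ≠ s(j, z) := by
        intro h
        rcases Sym2.eq_iff.mp h with ⟨h1, -⟩ | ⟨h1, h2⟩
        · exact hij h1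
        · exact hij (h1.trans h2)
      rw [Fwit, Finset.prod_insert (by simp [hne]), Finset.prod_insert (by simp [hne]),
          Finset.prod_insert (by simp), Finset.prod_insert (by simp), Finset.prod_singleton,
          hE, hS1, hE, hS2, hL,
          ← ENNReal.ofReal_mul hs0.le, ← ENNReal.ofReal_mul hp0.le,
          ← ENNReal.ofReal_mul hs0.le, ← ENNReal.ofReal_mul hp0.le]
      ring_nf
    -- per-pair bound
    have pair : ∀ i j : Fin n, i ≠ j → μ {ω | 3 ≤ W i j ω} ≤
        (((n - 2).choose 3 : ℕ) : ENNReal) * ENNReal.ofReal ((p ^ 2 * s ^ 2 * l) ^ 3) := by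
      intro i j hij
      set G : Finset (Fin n) := Finset.univ.filter (fun z => z ≠ i ∧ z ≠ j) with hG
      have hGmem : ∀ z, z ∈ G ↔ z ≠ i ∧ z ≠ j := by intro z; simp [hG]
      have hGcard : G.card = n - 2 := by
        have : G = Finset.univ \ {i, j} := by
          ext z; simp [hGmem z, not_or]
        rw [this, Finset.card_sdiff_of_subset (Finset.subset_univ _), Finset.card_univ, Fintype.card_fin,
          Finset.card_insert_of_notMem (by simpa using hij), Finset.card_singleton]
      have hsub : {ω | 3 ≤ W i j ω} ⊆
          ⋃ t ∈ G.powersetCard 3, ⋂ z ∈ t, ⋂ k ∈ Fwit n i j z, {ω | X k ω = true} := by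
        intro ω hω
        rw [Set.mem_setOf_eq, hWoff i j hij ω] at hω
        obtain ⟨t, hts, htc⟩ := Finset.exists_subset_card_eq hω
        refine Set.mem_iUnion₂.mpr ⟨t, ?_, ?_⟩
        · rw [Finset.mem_powersetCard]
          refine ⟨fun z hz => ?_, htc⟩
          have := hts hz
          rw [Finset.mem_filter] at this
          exact (hGmem z).mpr ⟨this.2.1, this.2.2.1⟩
        · rw [Set.mem_iInter₂]
          intro z hz
          have := hts hz
          rw [Finset.mem_filter] at this
          obtain ⟨-, -, -, h1, h2, h3, h4, h5⟩ := this
          simp only [Fwit, Finset.mem_insert, Finset.mem_singleton, Set.mem_iInter,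
            Set.mem_setOf_eq]
          rintro k (rfl|rfl|rfl|rfl|rfl) <;> assumption
      calc μ {ω | 3 ≤ W i j ω}
          ≤ ∑ t ∈ G.powersetCard 3, μ (⋂ z ∈ t, ⋂ k ∈ Fwit n i j z, {ω | X k ω = true}) :=
            (measure_mono hsub).trans (measure_biUnion_finset_le _ _)
        _ ≤ ∑ _t ∈ G.powersetCard 3, ENNReal.ofReal ((p ^ 2 * s ^ 2 * l) ^ 3) := by
            refine Finset.sum_le_sum fun t ht => ?_
            rw [Finset.mem_powersetCard] at ht
            obtain ⟨htG, htc⟩ := ht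
            have hdisj : ∀ z ∈ t, ∀ z' ∈ t, z ≠ z' →
                Disjoint (Fwit n i j z) (Fwit n i j z') := by
              intro z hz z' hz' hzz
              obtain ⟨h1, h2⟩ := (hGmem z).mp (htG hz)
              obtain ⟨h3, h4⟩ := (hGmem z').mp (htG hz')
              exact Fwit_disjoint h1 h2 h3 h4 hzz
            rw [← Finset.set_biInter_biUnion t (Fwit n i j) (fun k => {ω | X k ω = true}),
              key, Finset.prod_biUnion hdisj]
            rw [Finset.prod_congr rfl (fun z hz => hFprod i j z hij), Finset.prod_const, htc,
              ← ENNReal.ofReal_pow hx0]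
        _ = (((n - 2).choose 3 : ℕ) : ENNReal) * ENNReal.ofReal ((p ^ 2 * s ^ 2 * l) ^ 3) := by
            rw [Finset.sum_const, Finset.card_powersetCard, hGcard, nsmul_eq_mul]
    -- union bound over ordered pairs
    have hsub2 : {ω | ∃ i j : Fin n, i ≠ j ∧ 3 ≤ W i j ω} ⊆
        ⋃ pr ∈ (Finset.univ (α := Fin n)).offDiag, {ω | 3 ≤ W pr.1 pr.2 ω} := by
      rintro ω ⟨i, j, hij, hW⟩
      exact Set.mem_iUnion₂.mpr ⟨(i, j), by simp [Finset.mem_offDiag, hij], hW⟩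
    have hcard : ((Finset.univ (α := Fin n)).offDiag).card = n * n - n := by
      rw [Finset.offDiag_card, Finset.card_univ, Fintype.card_fin]
    calc μ {ω | ∃ i j : Fin n, i ≠ j ∧ 3 ≤ W i j ω}
        ≤ ∑ pr ∈ (Finset.univ (α := Fin n)).offDiag, μ {ω | 3 ≤ W pr.1 pr.2 ω} :=
          (measure_mono hsub2).trans (measure_biUnion_finset_le _ _)
      _ ≤ ∑ _pr ∈ (Finset.univ (α := Fin n)).offDiag,
            (((n - 2).choose 3 : ℕ) : ENNReal) * ENNReal.ofReal ((p ^ 2 * s ^ 2 * l) ^ 3) := by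
          refine Finset.sum_le_sum fun pr hpr => ?_
          rw [Finset.mem_offDiag] at hpr
          exact pair pr.1 pr.2 hpr.2.2
      _ = ((n * n - n : ℕ) : ENNReal) *
            ((((n - 2).choose 3 : ℕ) : ENNReal) * ENNReal.ofReal ((p ^ 2 * s ^ 2 * l) ^ 3)) := by
          rw [Finset.sum_const, hcard, nsmul_eq_mul]
      _ ≤ ENNReal.ofReal ((n : ℝ) * ((n : ℝ) - 1) *
            (((n : ℝ) - 2) ^ 3 * p ^ 6 * s ^ 6 * l ^ 3) / 6) := by
          rw [← mul_assoc, ← Nat.cast_mul, ← ENNReal.ofReal_natCast,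
            ← ENNReal.ofReal_mul (Nat.cast_nonneg _)]
          apply ENNReal.ofReal_le_ofReal
          have hc1 : ((n * n - n : ℕ) : ℝ) = (n : ℝ) * ((n : ℝ) - 1) := by
            rw [Nat.cast_sub (Nat.le_mul_of_pos_left n (by omega))]
            push_cast; ring
          have hc2 : ((n - 2 : ℕ) : ℝ) = (n : ℝ) - 2 := by
            rw [Nat.cast_sub (by omega)]; norm_num
          have hch : (((n - 2).choose 3 : ℕ) : ℝ) ≤ ((n : ℝ) - 2) ^ 3 / 6 := by
            have h := Nat.choose_le_pow_div (α := ℝ) 3 (n - 2)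
            rw [Nat.factorial] at h
            push_cast at h ⊢
            rw [hc2] at h
            convert h using 2
            · rfl
            · norm_num [Nat.factorial]
          have hn2 : (0 : ℝ) ≤ (n : ℝ) - 2 := by
            have : (3:ℝ) ≤ n := by exact_mod_cast hn
            linarith
          have hn0 : (0 : ℝ) ≤ (n : ℝ) * ((n : ℝ) - 1) := by
            have : (3:ℝ) ≤ n := by exact_mod_cast hn
            nlinarith
          push_cast [hc1]
          calc (n : ℝ) * ((n : ℝ) - 1) * (((n - 2).choose 3 : ℕ) : ℝ) * (p ^ 2 * s ^ 2 * l) ^ 3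
              ≤ (n : ℝ) * ((n : ℝ) - 1) * (((n : ℝ) - 2) ^ 3 / 6) * (p ^ 2 * s ^ 2 * l) ^ 3 := by
                gcongr
            _ = (n : ℝ) * ((n : ℝ) - 1) *
                (((n : ℝ) - 2) ^ 3 * p ^ 6 * s ^ 6 * l ^ 3) / 6 := by ring
  ·
    have hn3 : (3:ℝ) ≤ n := by exact_mod_cast hn
    have hn0 : (0:ℝ) < n := by linarith
    have hn2 : (0:ℝ) ≤ (n:ℝ) - 2 := by linarith
    have hs0 := hs.1; have hl0 := hl.1
    have hp6 : p ^ 6 ≤ (c * Real.log n / n) ^ 6 := pow_le_pow_left₀ hp0.le hpc 6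
    have step1 : (n : ℝ) * ((n : ℝ) - 1) * (((n : ℝ) - 2) ^ 3 * p ^ 6 * s ^ 6 * l ^ 3) / 6 ≤
        (n : ℝ) * (n : ℝ) * ((n : ℝ) ^ 3 * (c * Real.log n / n) ^ 6 * s ^ 6 * l ^ 3) / 6 := by
      gcongr <;> first | positivity | linarith
    refine step1.trans (le_of_eq ?_)
    field_simp
  ·
    have h := Real.tendsto_pow_log_div_mul_add_atTop 1 0 6 one_ne_zero
    have h2 := (h.comp tendsto_natCast_atTop_atTop).const_mul (c ^ 6 * s ^ 6 * l ^ 3 / 6)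
    simp only [mul_zero] at h2
    refine h2.congr fun m => ?_
    simp [Function.comp, mul_div_assoc]
end
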